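/- Let G be a topological group generated by a symmetric, open, coarsely bounded identity neighborhood S. Then G admits a geometry; more precisely: (i) for every continuous left-invariant pseudometric d' on G there exists M > 0 with d'(g, h) ≤ M · d_S(g, h) for all g, h ∈ G, where d_S is the word metric with respect to S; and (ii) there exists a continuous left-invariant pseudometric \widehat{d} on G and constants L > 0, K ≥ 0 such that \widehat{d}(g, h) ≤ L·d_S(g, h) + K and d_S(g, h) ≤ L·\widehat{d}(g, h) + K for all g, h ∈ G, and \widehat{d} dominates every continuous left-invariant pseudometric on G up to additive and multiplicative constants. -/

import Mathlib

open Pointwise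

/-- A continuous, left-invariant pseudometric on a topological group `G`. -/
structure IsContLeftInvPseudometric (G : Type*) [Group G] [TopologicalSpace G]
    (d : G → G → ℝ) : Prop where
  continuous : Continuous fun p : G × G => d p.1 p.2
  self : ∀ x : G, d x x = 0
  symm : ∀ x y : G, d x y = d y x
  nonneg : ∀ x y : G, 0 ≤ d x y
  triangle : ∀ x y z : G, d x z ≤ d x y + d y z
  left_inv : ∀ g x y : G, d (g * x) (g * y) = d x y

/-- A subset `A` of a topological group `G` is coarsely bounded in `G` if it has
finite diameter with respect to every continuous left-invariant pseudometric on `G`. -/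
def IsCoarselyBounded (G : Type*) [Group G] [TopologicalSpace G] (A : Set G) : Prop :=
  ∀ d : G → G → ℝ, IsContLeftInvPseudometric G d →
    ∃ M : ℝ, ∀ a ∈ A, ∀ b ∈ A, d a b ≤ M

/-- The word length of `g` with respect to a generating set `S`: the least `n` such
that `g` is a product of `n` elements of `S`. -/
noncomputable def wordLength {G : Type*} [Group G] (S : Set G) (g : G) : ℕ :=
  sInf {n : ℕ | ∃ l : List G, l.length = n ∧ (∀ s ∈ l, s ∈ S) ∧ l.prod = g}

/-- `G` admits a geometry if there is a continuous left-invariant pseudometric on `G`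
which dominates, in the coarse Lipschitz sense, every continuous left-invariant
pseudometric on `G`. -/
def AdmitsAGeometry (G : Type*) [Group G] [TopologicalSpace G] : Prop :=
  ∃ d : G → G → ℝ, IsContLeftInvPseudometric G d ∧
    ∀ d' : G → G → ℝ, IsContLeftInvPseudometric G d' →
      ∃ L K : ℝ, 0 < L ∧ 0 ≤ K ∧ ∀ g h : G, d' g h ≤ L * d g h + K


section WordLemmas
variable {G : Type*} [Group G]

lemma exists_word (S : Set G) (hsymm : S⁻¹ = S) (hgen : Subgroup.closure S = ⊤) (g : G) :
    ∃ l : List G, (∀ s ∈ l, s ∈ S) ∧ l.prod = g := by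
  have hg : g ∈ Subgroup.closure S := by rw [hgen]; trivial
  induction hg using Subgroup.closure_induction with
  | mem x hx => exact ⟨[x], by simp [hx]⟩
  | one => exact ⟨[], by simp⟩
  | mul x y hx hy ihx ihy =>
    obtain ⟨l1, h1, p1⟩ := ihx
    obtain ⟨l2, h2, p2⟩ := ihy
    refine ⟨l1 ++ l2, ?_, by simp [p1, p2]⟩
    intro s hs
    rcases List.mem_append.1 hs with h | h
    · exact h1 s h
    · exact h2 s h
  | inv x hx ih =>
    obtain ⟨l, hmem, hp⟩ := ih
    refine ⟨(l.map Inv.inv).reverse, ?_, ?_⟩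
    · intro s hs
      rw [List.mem_reverse, List.mem_map] at hs
      obtain ⟨a, ha, rfl⟩ := hs
      rw [← hsymm]
      simpa using hmem a ha
    · rw [← List.prod_inv_reverse, hp]

lemma wordLength_le (S : Set G) {g : G} (l : List G) (hl : ∀ s ∈ l, s ∈ S)
    (hp : l.prod = g) : wordLength S g ≤ l.length :=
  Nat.sInf_le ⟨l, rfl, hl, hp⟩

lemma wordLength_spec (S : Set G) (hsymm : S⁻¹ = S) (hgen : Subgroup.closure S = ⊤) (g : G) :
    ∃ l : List G, l.length = wordLength S g ∧ (∀ s ∈ l, s ∈ S) ∧ l.prod = g := by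
  have hne : {n : ℕ | ∃ l : List G, l.length = n ∧ (∀ s ∈ l, s ∈ S) ∧ l.prod = g}.Nonempty := by
    obtain ⟨l, hl, hp⟩ := exists_word S hsymm hgen g
    exact ⟨l.length, l, rfl, hl, hp⟩
  exact Nat.sInf_mem hne

lemma wordLength_one (S : Set G) : wordLength S (1 : G) = 0 :=
  Nat.le_zero.1 (by simpa using wordLength_le S ([] : List G) (by simp) (by simp))

lemma wordLength_mul_le (S : Set G) (hsymm : S⁻¹ = S) (hgen : Subgroup.closure S = ⊤)
    (a b : G) : wordLength S (a * b) ≤ wordLength S a + wordLength S b := by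
  obtain ⟨l1, hl1, hm1, hp1⟩ := wordLength_spec S hsymm hgen a
  obtain ⟨l2, hl2, hm2, hp2⟩ := wordLength_spec S hsymm hgen b
  have := wordLength_le S (g := a * b) (l1 ++ l2)
    (by intro s hs; rcases List.mem_append.1 hs with h | h; exacts [hm1 s h, hm2 s h])
    (by simp [hp1, hp2])
  simpa [hl1, hl2] using this

lemma wordLength_le_one (S : Set G) {s : G} (hs : s ∈ S) : wordLength S s ≤ 1 := by
  simpa using wordLength_le S [s] (by simp [hs]) (by simp)

end WordLemmas
section P
variable {G : Type*} [Group G] [TopologicalSpace G] [IsTopologicalGroup G]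

lemma list_bound {S : Set G} {d : G → G → ℝ} (hd : IsContLeftInvPseudometric G d)
    {M₀ : ℝ} (hM : ∀ a ∈ S, ∀ b ∈ S, d a b ≤ M₀) (h1S : (1 : G) ∈ S) :
    ∀ l : List G, (∀ s ∈ l, s ∈ S) → d 1 l.prod ≤ M₀ * l.length := by
  intro l
  induction l with
  | nil => simp [hd.self]
  | cons s t ih =>
    intro hmem
    have h1 : d 1 (s * t.prod) ≤ d 1 s + d s (s * t.prod) := hd.triangle _ _ _
    have h2 : d s (s * t.prod) = d 1 t.prod := by
      have := hd.left_inv s 1 t.prod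
      simpa using this
    have h3 : d 1 s ≤ M₀ := hM 1 h1S s (hmem s (by simp))
    have h4 : d 1 t.prod ≤ M₀ * t.length := ih (fun x hx => hmem x (by simp [hx]))
    simp only [List.prod_cons, List.length_cons]
    push_cast
    calc d 1 (s * t.prod) ≤ M₀ + M₀ * t.length := by rw [h2] at h1; linarith
    _ = M₀ * (t.length + 1) := by ring

lemma part_one (S : Set G) (hsymm : S⁻¹ = S) (h1S : (1 : G) ∈ S)
    (hCB : IsCoarselyBounded G S) (hgen : Subgroup.closure S = ⊤) :
    ∀ d' : G → G → ℝ, IsContLeftInvPseudometric G d' →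
      ∃ M : ℝ, 0 < M ∧ ∀ g h : G, d' g h ≤ M * (wordLength S (g⁻¹ * h) : ℝ) := by
  intro d' hd'
  obtain ⟨M₀, hM₀⟩ := hCB d' hd'
  have hM₀0 : 0 ≤ M₀ := by
    have := hM₀ 1 h1S 1 h1S
    have h0 := hd'.self 1
    linarith
  refine ⟨M₀ + 1, by linarith, fun g h => ?_⟩
  obtain ⟨l, hlen, hmem, hp⟩ := wordLength_spec S hsymm hgen (g⁻¹ * h)
  have h1 : d' g h = d' 1 (g⁻¹ * h) := by
    have := hd'.left_inv g 1 (g⁻¹ * h)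
    simpa [mul_assoc] using this
  have h2 := list_bound hd' hM₀ h1S l hmem
  rw [hp, hlen] at h2
  rw [h1]
  have hn : (0 : ℝ) ≤ (wordLength S (g⁻¹ * h) : ℝ) := by positivity
  nlinarith

lemma exists_sym_cube (W : Set G) (hW : IsOpen W) (h1 : (1 : G) ∈ W) :
    ∃ U : Set G, (IsOpen U ∧ (1 : G) ∈ U ∧ U⁻¹ = U) ∧ U * U * U ⊆ W := by
  obtain ⟨U₁, hU₁o, hU₁1, hU₁⟩ := exists_open_nhds_one_mul_subset (hW.mem_nhds h1)
  obtain ⟨U₂, hU₂o, hU₂1, hU₂⟩ := exists_open_nhds_one_mul_subset (hU₁o.mem_nhds hU₁1)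
  have hU₂sub : U₂ ⊆ U₁ := fun x hx => hU₂ (by simpa using Set.mul_mem_mul hx hU₂1)
  refine ⟨U₂ ∩ U₂⁻¹, ⟨hU₂o.inter hU₂o.inv, ⟨hU₂1, by simpa using hU₂1⟩, by
    rw [Set.inter_inv, inv_inv, Set.inter_comm]⟩, ?_⟩
  have hsub : U₂ ∩ U₂⁻¹ ⊆ U₂ := Set.inter_subset_left
  calc (U₂ ∩ U₂⁻¹) * (U₂ ∩ U₂⁻¹) * (U₂ ∩ U₂⁻¹)
      ⊆ U₂ * U₂ * U₂ := by
        exact Set.mul_subset_mul (Set.mul_subset_mul hsub hsub) hsub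
    _ ⊆ U₁ * U₂ := Set.mul_subset_mul_right hU₂
    _ ⊆ U₁ * U₁ := Set.mul_subset_mul_left hU₂sub
    _ ⊆ W := hU₁

lemma exists_chain (S : Set G) (hSopen : IsOpen S) (h1S : (1 : G) ∈ S) (hsymm : S⁻¹ = S) :
    ∃ V : ℕ → Set G, V 0 = S ∧ (∀ n, IsOpen (V n)) ∧ (∀ n, (1 : G) ∈ V n) ∧
      (∀ n, (V n)⁻¹ = V n) ∧ (∀ n, V (n + 1) * V (n + 1) * V (n + 1) ⊆ V n) := by
  let T := {U : Set G // IsOpen U ∧ (1 : G) ∈ U ∧ U⁻¹ = U}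
  have step : ∀ u : T, ∃ u' : T, u'.1 * u'.1 * u'.1 ⊆ u.1 := by
    rintro ⟨U, hUo, hU1, hUs⟩
    obtain ⟨U', hU', hcube⟩ := exists_sym_cube U hUo hU1
    exact ⟨⟨U', hU'⟩, hcube⟩
  choose f hf using step
  let Vs : ℕ → T := fun n => Nat.rec ⟨S, hSopen, h1S, hsymm⟩ (fun _ prev => f prev) n
  refine ⟨fun n => (Vs n).1, rfl, fun n => (Vs n).2.1, fun n => (Vs n).2.2.1,
    fun n => (Vs n).2.2.2, fun n => ?_⟩
  exact hf (Vs n)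

end P


section Rho
variable {G : Type*} [Group G]

open Classical in
/-- Birkhoff–Kakutani weight attached to a chain of neighborhoods. -/
noncomputable def bkRho (V : ℕ → Set G) (z : G) : NNReal :=
  if h : ∃ n, z ∉ V n then 2⁻¹ ^ Nat.find h else 0

variable (V : ℕ → Set G)

open Classical

set_option linter.unusedSectionVars false

lemma bkRho_le_one (z : G) : bkRho V z ≤ 1 := by
  rw [bkRho]
  split
  · exact pow_le_one' (by norm_num) _
  · exact zero_le_one

lemma bkRho_eq_zero_iff (z : G) : bkRho V z = 0 ↔ ∀ n, z ∈ V n := by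
  by_cases h : ∃ n, z ∉ V n
  · rw [bkRho, dif_pos h]
    constructor
    · intro h0; exact absurd h0 (pow_ne_zero _ (by norm_num))
    · intro hall; exact absurd h (by push_neg; exact hall)
  · rw [bkRho, dif_neg h]
    push_neg at h
    simpa using h

lemma bkRho_eq_one_of_not_mem {z : G} (hz : z ∉ V 0) : bkRho V z = 1 := by
  have h : ∃ n, z ∉ V n := ⟨0, hz⟩
  rw [bkRho, dif_pos h, (Nat.find_eq_zero h).2 hz, pow_zero]

lemma bkRho_values (z : G) : bkRho V z = 0 ∨ ∃ k, bkRho V z = 2⁻¹ ^ k := by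
  by_cases h : ∃ n, z ∉ V n
  · rw [bkRho, dif_pos h]; exact Or.inr ⟨Nat.find h, rfl⟩
  · rw [bkRho, dif_neg h]; exact Or.inl rfl

lemma mem_of_bkRho_le {z : G} {n : ℕ} (h : bkRho V z ≤ 2⁻¹ ^ (n + 1)) : z ∈ V n := by
  by_contra hz
  have he : ∃ m, z ∉ V m := ⟨n, hz⟩
  rw [bkRho, dif_pos he] at h
  rcases Nat.lt_or_ge n (Nat.find he) with h2 | h2
  · exact hz (by simpa using Nat.find_min he h2)
  · have h21 : (2⁻¹ : NNReal) < 1 := by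
      rw [← NNReal.coe_lt_coe]; norm_num
    have hgt : (2⁻¹ : NNReal) ^ (n + 1) < 2⁻¹ ^ Nat.find he :=
      (pow_lt_pow_iff_right_of_lt_one₀ (by norm_num) h21).2 (by omega)
    exact absurd h (not_le.2 hgt)

lemma bkRho_le_of_mem (hmono : ∀ n, V (n + 1) ⊆ V n) {z : G} {n : ℕ} (hz : z ∈ V n) :
    bkRho V z ≤ 2⁻¹ ^ (n + 1) := by
  have hanti : Antitone V := antitone_nat_of_succ_le hmono
  by_cases h : ∃ m, z ∉ V m
  · rw [bkRho, dif_pos h]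
    have hfind : n + 1 ≤ Nat.find h := by
      rw [Nat.le_find_iff]
      intro m hm
      simpa using hanti (by omega : m ≤ n) hz
    exact pow_le_pow_right_of_le_one' (by rw [← NNReal.coe_le_coe]; norm_num) hfind
  · rw [bkRho, dif_neg h]; exact zero_le

lemma bkRho_lt_one_mem {z : G} (h : bkRho V z < 1) : z ∈ V 0 := by
  by_contra hz
  rw [bkRho_eq_one_of_not_mem V hz] at h
  exact lt_irrefl _ h

lemma bkRho_inv (hVsymm : ∀ n, (V n)⁻¹ = V n) (z : G) : bkRho V z⁻¹ = bkRho V z := by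
  have hiff : ∀ n, (z⁻¹ ∉ V n ↔ z ∉ V n) := by
    intro n
    constructor
    · intro h hz
      exact h (by rw [← hVsymm n]; simpa using hz)
    · intro h hz
      exact h (by
        have : z⁻¹ ∈ (V n)⁻¹ := by rw [hVsymm n]; exact hz
        simpa using this)
  by_cases h : ∃ n, z ∉ V n
  · have h' : ∃ n, z⁻¹ ∉ V n := by
      obtain ⟨n, hn⟩ := h; exact ⟨n, (hiff n).2 hn⟩
    rw [bkRho, dif_pos h', bkRho, dif_pos h]
    congr 1
    exact le_antisymm (Nat.find_mono fun n hn => (hiff n).2 hn)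
      (Nat.find_mono fun n hn => (hiff n).1 hn)
  · push_neg at h
    have h' : ¬∃ n, z⁻¹ ∉ V n := fun ⟨n, hn⟩ => (hiff n).1 hn (h n)
    rw [bkRho, dif_neg h', bkRho, dif_neg (by push_neg; exact h)]
end Rho

section Rho2
set_option linter.unusedSectionVars false
variable {G : Type*} [Group G] (V : ℕ → Set G)

lemma bkRho_mul3 (hmono : ∀ n, V (n + 1) ⊆ V n)
    (hcube : ∀ n, V (n + 1) * V (n + 1) * V (n + 1) ⊆ V n)
    (a b c : G) :
    bkRho V (a * b * c) ≤ 2 * max (bkRho V a) (max (bkRho V b) (bkRho V c)) := by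
  set M := max (bkRho V a) (max (bkRho V b) (bkRho V c)) with hM
  have ha : bkRho V a ≤ M := le_max_left _ _
  have hb : bkRho V b ≤ M := (le_max_left _ _).trans (le_max_right _ _)
  have hc : bkRho V c ≤ M := (le_max_right _ _).trans (le_max_right _ _)
  by_cases hM2 : 2⁻¹ ≤ M
  · calc bkRho V (a * b * c) ≤ 1 := bkRho_le_one V _
      _ = 2 * 2⁻¹ := by
        rw [← NNReal.coe_inj]; norm_num
      _ ≤ 2 * M := by exact mul_le_mul_right hM2 2
  · push_neg at hM2
    -- M is the value of bkRho at one of a, b, c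
    have hMval : M = 0 ∨ ∃ k, M = 2⁻¹ ^ k := by
      rcases max_choice (bkRho V b) (bkRho V c) with h | h <;>
      rcases max_choice (bkRho V a) (max (bkRho V b) (bkRho V c)) with h' | h' <;>
      · rw [hM, h']
        first
          | exact bkRho_values V a
          | (rw [h]; first | exact bkRho_values V b | exact bkRho_values V c)
    rcases hMval with h0 | ⟨k, hk⟩
    · -- all three in every V n, so is the product
      have hall : ∀ z ∈ [a, b, c], ∀ n, z ∈ V n := by
        intro z hz n
        have : bkRho V z = 0 := by
          rcases List.mem_cons.1 hz with rfl | hz'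
          · exact le_antisymm (h0 ▸ ha) zero_le
          rcases List.mem_cons.1 hz' with rfl | hz''
          · exact le_antisymm (h0 ▸ hb) zero_le
          · simp only [List.mem_singleton] at hz''
            subst hz''
            exact le_antisymm (h0 ▸ hc) zero_le
        exact (bkRho_eq_zero_iff V z).1 this n
      have hprod : ∀ n, a * b * c ∈ V n := by
        intro n
        exact hcube n (Set.mul_mem_mul (Set.mul_mem_mul
          (hall a (by simp) (n+1)) (hall b (by simp) (n+1))) (hall c (by simp) (n+1)))
      rw [(bkRho_eq_zero_iff V _).2 hprod]
      exact zero_le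
    · -- M = 2⁻¹ ^ k with k ≥ 2
      have h21 : (2⁻¹ : NNReal) < 1 := by rw [← NNReal.coe_lt_coe]; norm_num
      have hkge : 2 ≤ k := by
        by_contra hlt
        push_neg at hlt
        interval_cases k
        · rw [hk, pow_zero] at hM2
          exact absurd hM2 (by rw [← NNReal.coe_lt_coe]; norm_num)
        · rw [hk, pow_one] at hM2; exact lt_irrefl _ hM2
      obtain ⟨n, rfl⟩ : ∃ n, k = n + 2 := ⟨k - 2, by omega⟩
      have hmem : ∀ z, bkRho V z ≤ M → z ∈ V (n + 1) := by
        intro z hz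
        exact mem_of_bkRho_le V (by rw [← hk]; exact hz)
      have hprod : a * b * c ∈ V n :=
        hcube n (Set.mul_mem_mul (Set.mul_mem_mul (hmem a ha) (hmem b hb)) (hmem c hc))
      calc bkRho V (a * b * c) ≤ 2⁻¹ ^ (n + 1) := bkRho_le_of_mem V hmono hprod
        _ = 2 * 2⁻¹ ^ (n + 2) := by
          rw [pow_succ _ (n+1), ← mul_assoc]
          rw [show (2 : NNReal) * 2⁻¹ ^ (n + 1) * 2⁻¹ = 2 * 2⁻¹ * 2⁻¹ ^ (n + 1) by ring,
            show (2 : NNReal) * 2⁻¹ = 1 by rw [← NNReal.coe_inj]; norm_num, one_mul]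
        _ = 2 * M := by rw [hk]

end Rho2

section Chain
set_option linter.unusedSectionVars false
variable {G : Type*} [Group G] (V : ℕ → Set G)

lemma bkRho_prod_le (h1V : ∀ n, (1 : G) ∈ V n) (hVsymm : ∀ n, (V n)⁻¹ = V n)
    (hmono : ∀ n, V (n + 1) ⊆ V n)
    (hcube : ∀ n, V (n + 1) * V (n + 1) * V (n + 1) ⊆ V n) (l : List G) :
    (bkRho V l.prod : ℝ) ≤ 2 * (((l.map (bkRho V)).sum : NNReal) : ℝ) := by
  classical
  set d : G → G → NNReal := fun x y => bkRho V (x⁻¹ * y) with hd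
  have dself : ∀ x, d x x = 0 := fun x => by
    simp only [hd, inv_mul_cancel]
    exact (bkRho_eq_zero_iff V 1).2 h1V
  have dcomm : ∀ x y, d x y = d y x := fun x y => by
    simp only [hd]
    rw [← bkRho_inv V hVsymm, mul_inv_rev, inv_inv]
  set D : G → G → ℝ := fun x y =>
    @dist G (PseudoMetricSpace.ofPreNNDist d dself dcomm).toDist x y with hD
  have hDle : ∀ x y, D x y ≤ d x y :=
    fun x y => PseudoMetricSpace.dist_ofPreNNDist_le d dself dcomm x y
  have htri : ∀ x y z, D x z ≤ D x y + D y z := fun x y z =>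
    @dist_triangle G (PseudoMetricSpace.ofPreNNDist d dself dcomm) x y z
  have hself : ∀ x, D x x = 0 := fun x =>
    @dist_self G (PseudoMetricSpace.ofPreNNDist d dself dcomm) x
  have hchain : ∀ (t : List G) (x : G), D x (x * t.prod) ≤ ((t.map (bkRho V)).sum : NNReal) := by
    intro t
    induction t with
    | nil => intro x; simp [hself x]
    | cons s u ih =>
      intro x
      have h1 : D x (x * (s * u.prod)) ≤ D x (x * s) + D (x * s) (x * s * u.prod) := by
        have := htri x (x * s) (x * s * u.prod)
        simpa [mul_assoc] using this
      have h2 : D x (x * s) ≤ (bkRho V s : ℝ) := by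
        have := hDle x (x * s)
        simpa [hd] using this
      have h3 := ih (x * s)
      calc D x (x * (s :: u).prod) = D x (x * (s * u.prod)) := by simp
        _ ≤ (bkRho V s : ℝ) + ((u.map (bkRho V)).sum : NNReal) := by linarith
        _ = (((s :: u).map (bkRho V)).sum : NNReal) := by
          simp [NNReal.coe_add]
  have hd4 : ∀ x₁ x₂ x₃ x₄ : G, d x₁ x₄ ≤ 2 * max (d x₁ x₂) (max (d x₂ x₃) (d x₃ x₄)) := by
    intro x₁ x₂ x₃ x₄
    have hprod : x₁⁻¹ * x₄ = (x₁⁻¹ * x₂) * (x₂⁻¹ * x₃) * (x₃⁻¹ * x₄) := by group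
    simp only [hd]
    rw [hprod]
    exact bkRho_mul3 V hmono hcube _ _ _
  have hkey := PseudoMetricSpace.le_two_mul_dist_ofPreNNDist d dself dcomm hd4 1 l.prod
  have h1 : d 1 l.prod = bkRho V l.prod := by simp [hd]
  have h2 := hchain l 1
  rw [one_mul] at h2
  rw [h1] at hkey
  calc (bkRho V l.prod : ℝ) ≤ 2 * D 1 l.prod := hkey
    _ ≤ 2 * (((l.map (bkRho V)).sum : NNReal) : ℝ) := by linarith

end Chain

section DHat
set_option linter.unusedSectionVars false
variable {G : Type*} [Group G]

/-- Cost of a word: sum of Birkhoff–Kakutani weights of its letters. -/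
noncomputable def bkCost (V : ℕ → Set G) (l : List G) : ℝ := ((l.map (bkRho V)).sum : NNReal)

/-- Set of costs of words in `S` with a given product. -/
def bkCostSet (V : ℕ → Set G) (S : Set G) (x : G) : Set ℝ :=
  {c | ∃ l : List G, (∀ s ∈ l, s ∈ S) ∧ l.prod = x ∧ c = bkCost V l}

/-- The candidate maximal continuous left-invariant pseudometric. -/
noncomputable def bkD (V : ℕ → Set G) (S : Set G) (g h : G) : ℝ :=
  sInf (bkCostSet V S (g⁻¹ * h))

variable (V : ℕ → Set G) (S : Set G)

lemma bkCost_nonneg (l : List G) : 0 ≤ bkCost V l := NNReal.coe_nonneg _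

lemma bkCost_append (l₁ l₂ : List G) : bkCost V (l₁ ++ l₂) = bkCost V l₁ + bkCost V l₂ := by
  simp [bkCost]

lemma bkCostSet_nonempty (hsymm : S⁻¹ = S) (hgen : Subgroup.closure S = ⊤) (x : G) :
    (bkCostSet V S x).Nonempty := by
  obtain ⟨l, hl, hp⟩ := exists_word S hsymm hgen x
  exact ⟨bkCost V l, l, hl, hp, rfl⟩

lemma bkCostSet_bddBelow (x : G) : BddBelow (bkCostSet V S x) := by
  refine ⟨0, fun c hc => ?_⟩
  obtain ⟨l, -, -, rfl⟩ := hc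
  exact bkCost_nonneg V l

lemma bkD_le {g h : G} (l : List G) (hl : ∀ s ∈ l, s ∈ S) (hp : l.prod = g⁻¹ * h) :
    bkD V S g h ≤ bkCost V l :=
  csInf_le (bkCostSet_bddBelow V S _) ⟨l, hl, hp, rfl⟩

lemma bkD_nonneg (g h : G) : 0 ≤ bkD V S g h := by
  apply Real.sInf_nonneg
  rintro c ⟨l, -, -, rfl⟩
  exact bkCost_nonneg V l

lemma bkD_self (g : G) : bkD V S g g = 0 := by
  refine le_antisymm ?_ (bkD_nonneg V S g g)
  have := bkD_le V S (g := g) (h := g) [] (by simp) (by simp)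
  simpa [bkCost] using this

lemma bkCost_reverse_inv (hVsymm : ∀ n, (V n)⁻¹ = V n) (l : List G) :
    bkCost V (l.map Inv.inv).reverse = bkCost V l := by
  simp only [bkCost, List.map_reverse, List.sum_reverse, List.map_map]
  have heq : List.map (bkRho V ∘ Inv.inv) l = List.map (bkRho V) l :=
    List.map_congr_left fun s _ => by
      simp only [Function.comp_apply]
      exact bkRho_inv V hVsymm s
  rw [heq]

lemma bkCostSet_inv_subset (hsymm : S⁻¹ = S) (hVsymm : ∀ n, (V n)⁻¹ = V n) (x : G) :
    bkCostSet V S x ⊆ bkCostSet V S x⁻¹ := by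
  rintro c ⟨l, hl, hp, rfl⟩
  refine ⟨(l.map Inv.inv).reverse, ?_, ?_, (bkCost_reverse_inv V hVsymm l).symm⟩
  · intro s hs
    rw [List.mem_reverse, List.mem_map] at hs
    obtain ⟨a, ha, rfl⟩ := hs
    rw [← hsymm]
    simpa using hl a ha
  · rw [← List.prod_inv_reverse, hp]

lemma bkD_comm (hsymm : S⁻¹ = S) (hVsymm : ∀ n, (V n)⁻¹ = V n) (g h : G) :
    bkD V S g h = bkD V S h g := by
  have key : ∀ x : G, bkCostSet V S x = bkCostSet V S x⁻¹ := fun x =>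
    le_antisymm (bkCostSet_inv_subset V S hsymm hVsymm x)
      (by simpa using bkCostSet_inv_subset V S hsymm hVsymm x⁻¹)
  unfold bkD
  rw [key]
  congr 1
  group

lemma bkD_left_inv (g x y : G) : bkD V S (g * x) (g * y) = bkD V S x y := by
  unfold bkD
  congr 2
  group

lemma bkD_triangle (hsymm : S⁻¹ = S) (hgen : Subgroup.closure S = ⊤) (x y z : G) :
    bkD V S x z ≤ bkD V S x y + bkD V S y z := by
  refine le_of_forall_pos_le_add fun ε hε => ?_
  obtain ⟨c₁, ⟨l₁, hl₁, hp₁, rfl⟩, hc₁⟩ :=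
    exists_lt_of_csInf_lt (bkCostSet_nonempty V S hsymm hgen (x⁻¹ * y))
      (lt_add_of_pos_right _ (half_pos hε) : sInf (bkCostSet V S (x⁻¹ * y)) <
        sInf (bkCostSet V S (x⁻¹ * y)) + ε / 2)
  obtain ⟨c₂, ⟨l₂, hl₂, hp₂, rfl⟩, hc₂⟩ :=
    exists_lt_of_csInf_lt (bkCostSet_nonempty V S hsymm hgen (y⁻¹ * z))
      (lt_add_of_pos_right _ (half_pos hε) : sInf (bkCostSet V S (y⁻¹ * z)) <
        sInf (bkCostSet V S (y⁻¹ * z)) + ε / 2)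
  have hle : bkD V S x z ≤ bkCost V (l₁ ++ l₂) := by
    apply bkD_le
    · intro s hs
      rcases List.mem_append.1 hs with h | h
      exacts [hl₁ s h, hl₂ s h]
    · rw [List.prod_append, hp₁, hp₂]
      group
  rw [bkCost_append] at hle
  unfold bkD at *
  linarith

lemma bkD_le_rho {x y : G} (hxy : x⁻¹ * y ∈ S) : bkD V S x y ≤ (bkRho V (x⁻¹ * y) : ℝ) := by
  have := bkD_le V S (g := x) (h := y) [x⁻¹ * y] (by simpa using hxy) (by simp)
  simpa [bkCost] using this

lemma bkD_le_word (hsymm : S⁻¹ = S) (hgen : Subgroup.closure S = ⊤) (g h : G) :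
    bkD V S g h ≤ (wordLength S (g⁻¹ * h) : ℝ) := by
  obtain ⟨l, hlen, hmem, hp⟩ := wordLength_spec S hsymm hgen (g⁻¹ * h)
  have h1 : bkD V S g h ≤ bkCost V l := bkD_le V S l hmem hp
  have h2 : ((l.map (bkRho V)).sum : NNReal) ≤ (l.length : NNReal) := by
    have := List.sum_le_card_nsmul (l.map (bkRho V)) 1 (by
      intro x hx
      rw [List.mem_map] at hx
      obtain ⟨a, -, rfl⟩ := hx
      exact bkRho_le_one V a)
    simpa [List.length_map] using this
  have h3 : bkCost V l ≤ (l.length : ℝ) := by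
    rw [bkCost]
    exact_mod_cast h2
  rw [hlen] at h3
  linarith

lemma prod_mem_of_bkCost_lt (hV0 : V 0 = S) (h1V : ∀ n, (1 : G) ∈ V n)
    (hVsymm : ∀ n, (V n)⁻¹ = V n) (hmono : ∀ n, V (n + 1) ⊆ V n)
    (hcube : ∀ n, V (n + 1) * V (n + 1) * V (n + 1) ⊆ V n)
    {l : List G} (hc : bkCost V l < 2⁻¹) : l.prod ∈ S := by
  have h1 := bkRho_prod_le V h1V hVsymm hmono hcube l
  have h2 : (bkRho V l.prod : ℝ) < 1 := by
    rw [bkCost] at hc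
    linarith
  rw [← hV0]
  exact bkRho_lt_one_mem V (by exact_mod_cast h2)

end DHat

section Key
set_option linter.unusedSectionVars false
variable {G : Type*} [Group G] (V : ℕ → Set G) (S : Set G)

lemma word_le_of_cost (hV0 : V 0 = S) (h1V : ∀ n, (1 : G) ∈ V n)
    (hVsymm : ∀ n, (V n)⁻¹ = V n) (hmono : ∀ n, V (n + 1) ⊆ V n)
    (hcube : ∀ n, V (n + 1) * V (n + 1) * V (n + 1) ⊆ V n)
    (hsymm : S⁻¹ = S) (hgen : Subgroup.closure S = ⊤) :
    ∀ (n : ℕ) (l : List G), l.length = n → (∀ s ∈ l, s ∈ S) →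
      (wordLength S l.prod : ℝ) ≤ 8 * bkCost V l + 1 := by
  intro n
  induction n using Nat.strong_induction_on with
  | _ n ih =>
    intro l hlen hmem
    by_cases hsmall : bkCost V l < 4⁻¹
    · have hprod : l.prod ∈ S :=
        prod_mem_of_bkCost_lt V S hV0 h1V hVsymm hmono hcube (by
          calc bkCost V l < 4⁻¹ := hsmall
            _ < 2⁻¹ := by norm_num)
      have hw := wordLength_le_one S hprod
      have hc := bkCost_nonneg V l
      have : (wordLength S l.prod : ℝ) ≤ 1 := by exact_mod_cast hw
      linarith
    · push_neg at hsmall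
      have hlne : l ≠ [] := by
        rintro rfl
        simp [bkCost] at hsmall
        norm_num at hsmall
      have hlen1 : 1 ≤ l.length := List.length_pos_iff.2 hlne
      classical
      have hex : ∃ k, 4⁻¹ ≤ bkCost V (l.take (k + 1)) := by
        refine ⟨l.length - 1, ?_⟩
        rw [show l.length - 1 + 1 = l.length by omega, List.take_length]
        exact hsmall
      set k := Nat.find hex with hkdef
      have hPk : 4⁻¹ ≤ bkCost V (l.take (k + 1)) := Nat.find_spec hex
      have hklt : k < l.length := by
        have := Nat.find_le (h := hex) (by
          rw [show l.length - 1 + 1 = l.length by omega, List.take_length]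
          exact hsmall)
        omega
      have hprev : bkCost V (l.take k) < 4⁻¹ := by
        rcases Nat.eq_zero_or_pos k with hk0 | hk0
        · rw [hk0]
          simp [bkCost]
        · obtain ⟨j, hj⟩ : ∃ j, k = j + 1 := ⟨k - 1, by omega⟩
          have hmin := Nat.find_min hex (show j < Nat.find hex by rw [← hkdef]; omega)
          push_neg at hmin
          rw [hj]
          exact hmin
      have htake : l.take (k + 1) = l.take k ++ [l.get ⟨k, hklt⟩] := by
        rw [List.take_succ, List.getElem?_eq_getElem hklt]
        rfl
      have hm1 : (l.take k).prod ∈ S :=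
        prod_mem_of_bkCost_lt V S hV0 h1V hVsymm hmono hcube (by
          calc bkCost V (l.take k) < 4⁻¹ := hprev
            _ < 2⁻¹ := by norm_num)
      have hm2 : l.get ⟨k, hklt⟩ ∈ S := hmem _ (List.get_mem l ⟨k, hklt⟩)
      have hw1 : wordLength S (l.take (k + 1)).prod ≤ 2 := by
        rw [htake, List.prod_append, List.prod_singleton]
        calc wordLength S ((l.take k).prod * l.get ⟨k, hklt⟩)
            ≤ wordLength S (l.take k).prod + wordLength S (l.get ⟨k, hklt⟩) :=
              wordLength_mul_le S hsymm hgen _ _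
          _ ≤ 1 + 1 := Nat.add_le_add (wordLength_le_one S hm1) (wordLength_le_one S hm2)
      have hdroplen : (l.drop (k + 1)).length < n := by
        rw [List.length_drop]
        omega
      have ihd := ih _ hdroplen (l.drop (k + 1)) rfl
        (fun s hs => hmem s (List.mem_of_mem_drop hs))
      have hcost : bkCost V l = bkCost V (l.take (k + 1)) + bkCost V (l.drop (k + 1)) := by
        conv_lhs => rw [← List.take_append_drop (k + 1) l]
        rw [bkCost_append]
      have hsplitw : wordLength S l.prod ≤
          wordLength S (l.take (k + 1)).prod + wordLength S (l.drop (k + 1)).prod := by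
        conv_lhs => rw [← List.take_append_drop (k + 1) l]
        rw [List.prod_append]
        exact wordLength_mul_le S hsymm hgen _ _
      have h2r : (wordLength S (l.take (k+1)).prod : ℝ) ≤ 2 := by exact_mod_cast hw1
      have hsr : (wordLength S l.prod : ℝ) ≤ (wordLength S (l.take (k+1)).prod : ℝ) +
          (wordLength S (l.drop (k+1)).prod : ℝ) := by exact_mod_cast hsplitw
      linarith

lemma word_le_bkD (hV0 : V 0 = S) (h1V : ∀ n, (1 : G) ∈ V n)
    (hVsymm : ∀ n, (V n)⁻¹ = V n) (hmono : ∀ n, V (n + 1) ⊆ V n)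
    (hcube : ∀ n, V (n + 1) * V (n + 1) * V (n + 1) ⊆ V n)
    (hsymm : S⁻¹ = S) (hgen : Subgroup.closure S = ⊤) (g h : G) :
    (wordLength S (g⁻¹ * h) : ℝ) ≤ 8 * bkD V S g h + 1 := by
  have key := word_le_of_cost V S hV0 h1V hVsymm hmono hcube hsymm hgen
  refine le_of_forall_pos_le_add fun ε hε => ?_
  obtain ⟨c, ⟨l, hl, hp, rfl⟩, hc⟩ :=
    exists_lt_of_csInf_lt (bkCostSet_nonempty V S hsymm hgen (g⁻¹ * h))
      (lt_add_of_pos_right _ (by positivity : (0:ℝ) < ε / 8) :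
        sInf (bkCostSet V S (g⁻¹ * h)) < sInf (bkCostSet V S (g⁻¹ * h)) + ε / 8)
  have := key l.length l rfl hl
  rw [hp] at this
  unfold bkD at *
  linarith

end Key

section Cont
set_option linter.unusedSectionVars false
variable {G : Type*} [Group G] [TopologicalSpace G] [IsTopologicalGroup G]
variable (V : ℕ → Set G) (S : Set G)

lemma bkD_abs_sub (hsymm : S⁻¹ = S) (hgen : Subgroup.closure S = ⊤)
    (hVsymm : ∀ n, (V n)⁻¹ = V n) (x y a b : G) :
    |bkD V S a b - bkD V S x y| ≤ bkD V S x a + bkD V S y b := by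
  have tri := bkD_triangle V S hsymm hgen
  have comm := bkD_comm V S hsymm hVsymm
  rw [abs_sub_le_iff]
  constructor
  · have h1 : bkD V S a b ≤ bkD V S a x + bkD V S x b := tri a x b
    have h2 : bkD V S x b ≤ bkD V S x y + bkD V S y b := tri x y b
    have h3 : bkD V S a x = bkD V S x a := comm a x
    linarith
  · have h1 : bkD V S x y ≤ bkD V S x a + bkD V S a y := tri x a y
    have h2 : bkD V S a y ≤ bkD V S a b + bkD V S b y := tri a b y
    have h3 : bkD V S b y = bkD V S y b := comm b y
    linarith

lemma bkD_continuous (hV0 : V 0 = S) (hVopen : ∀ n, IsOpen (V n))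
    (h1V : ∀ n, (1 : G) ∈ V n) (hVsymm : ∀ n, (V n)⁻¹ = V n)
    (hmono : ∀ n, V (n + 1) ⊆ V n)
    (hsymm : S⁻¹ = S) (hgen : Subgroup.closure S = ⊤) :
    Continuous fun p : G × G => bkD V S p.1 p.2 := by
  have hVS : ∀ n, V n ⊆ S := by
    intro n
    rw [← hV0]
    exact antitone_nat_of_succ_le hmono (Nat.zero_le n)
  rw [continuous_iff_continuousAt]
  rintro ⟨x, y⟩
  rw [ContinuousAt, Metric.tendsto_nhds]
  intro ε hε
  obtain ⟨n, hn⟩ : ∃ n, ((2 : ℝ)⁻¹) ^ n < ε / 4 := by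
    rcases exists_pow_lt_of_lt_one (by positivity : (0:ℝ) < ε / 4)
      (by norm_num : (2 : ℝ)⁻¹ < 1) with ⟨n, hn⟩
    exact ⟨n, hn⟩
  have hUopen : IsOpen {q : G × G | x⁻¹ * q.1 ∈ V n ∧ y⁻¹ * q.2 ∈ V n} := by
    apply IsOpen.inter
    · exact (hVopen n).preimage (continuous_const.mul continuous_fst)
    · exact (hVopen n).preimage (continuous_const.mul continuous_snd)
  have hUmem : (x, y) ∈ {q : G × G | x⁻¹ * q.1 ∈ V n ∧ y⁻¹ * q.2 ∈ V n} := by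
    constructor <;> simp [h1V n]
  filter_upwards [hUopen.mem_nhds hUmem] with q hq
  obtain ⟨hq1, hq2⟩ := hq
  have hb1 : bkD V S x q.1 ≤ ((2:ℝ)⁻¹) ^ (n + 1) := by
    have h1 := bkD_le_rho V S (x := x) (y := q.1) (hVS n hq1)
    have h2 : (bkRho V (x⁻¹ * q.1) : ℝ) ≤ ((2:ℝ)⁻¹) ^ (n + 1) := by
      have := bkRho_le_of_mem V hmono hq1
      have h3 : ((bkRho V (x⁻¹ * q.1) : NNReal) : ℝ) ≤ (((2⁻¹ : NNReal) ^ (n+1) : NNReal) : ℝ) :=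
        NNReal.coe_le_coe.2 this
      rw [NNReal.coe_pow] at h3
      simpa using h3
    linarith
  have hb2 : bkD V S y q.2 ≤ ((2:ℝ)⁻¹) ^ (n + 1) := by
    have h1 := bkD_le_rho V S (x := y) (y := q.2) (hVS n hq2)
    have h2 : (bkRho V (y⁻¹ * q.2) : ℝ) ≤ ((2:ℝ)⁻¹) ^ (n + 1) := by
      have := bkRho_le_of_mem V hmono hq2
      have h3 : ((bkRho V (y⁻¹ * q.2) : NNReal) : ℝ) ≤ (((2⁻¹ : NNReal) ^ (n+1) : NNReal) : ℝ) :=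
        NNReal.coe_le_coe.2 this
      rw [NNReal.coe_pow] at h3
      simpa using h3
    linarith
  have habs := bkD_abs_sub V S hsymm hgen hVsymm x y q.1 q.2
  have hpow : ((2:ℝ)⁻¹) ^ (n + 1) ≤ ((2:ℝ)⁻¹) ^ n := by
    apply pow_le_pow_of_le_one (by norm_num) (by norm_num)
    omega
  rw [Real.dist_eq]
  calc |bkD V S q.1 q.2 - bkD V S x y| ≤ bkD V S x q.1 + bkD V S y q.2 := habs
    _ ≤ ((2:ℝ)⁻¹) ^ n + ((2:ℝ)⁻¹) ^ n := by linarith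
    _ < ε := by linarith

end Cont

/-- If `G` is generated by a symmetric, open, coarsely bounded identity neighborhood
`S`, then `G` admits a geometry: every continuous left-invariant pseudometric is
dominated by the word metric `d_S`, and there is a continuous left-invariant
pseudometric quasi-isometric to `d_S` which dominates every continuous
left-invariant pseudometric up to constants. -/
theorem admitsGeometry_of_symm_open_cb_generating {G : Type*} [Group G] [TopologicalSpace G]
    [IsTopologicalGroup G]
    (S : Set G) (hsymm : S⁻¹ = S) (hSopen : IsOpen S) (h1S : (1 : G) ∈ S)
    (hCB : IsCoarselyBounded G S) (hgen : Subgroup.closure S = ⊤) :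
    (∀ d' : G → G → ℝ, IsContLeftInvPseudometric G d' →
      ∃ M : ℝ, 0 < M ∧ ∀ g h : G, d' g h ≤ M * (wordLength S (g⁻¹ * h) : ℝ)) ∧
    ∃ dhat : G → G → ℝ, IsContLeftInvPseudometric G dhat ∧
      (∃ L K : ℝ, 0 < L ∧ 0 ≤ K ∧
        (∀ g h : G, dhat g h ≤ L * (wordLength S (g⁻¹ * h) : ℝ) + K) ∧
        (∀ g h : G, (wordLength S (g⁻¹ * h) : ℝ) ≤ L * dhat g h + K)) ∧
      (∀ d' : G → G → ℝ, IsContLeftInvPseudometric G d' →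
        ∃ L K : ℝ, 0 < L ∧ 0 ≤ K ∧ ∀ g h : G, d' g h ≤ L * dhat g h + K) := by
  obtain ⟨V, hV0, hVopen, h1V, hVsymm, hcube⟩ := exists_chain S hSopen h1S hsymm
  have hmono : ∀ n, V (n + 1) ⊆ V n := by
    intro n x hx
    have h1 : (1 : G) ∈ V (n + 1) := h1V (n + 1)
    have : (1 : G) * 1 * x ∈ V (n + 1) * V (n + 1) * V (n + 1) :=
      Set.mul_mem_mul (Set.mul_mem_mul h1 h1) hx
    simpa using hcube n this
  have hpart1 := part_one S hsymm h1S hCB hgen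
  refine ⟨hpart1, fun g h => bkD V S g h, ?_, ?_, ?_⟩
  · exact ⟨bkD_continuous V S hV0 hVopen h1V hVsymm hmono hsymm hgen,
      bkD_self V S, bkD_comm V S hsymm hVsymm, bkD_nonneg V S,
      bkD_triangle V S hsymm hgen, bkD_left_inv V S⟩
  · refine ⟨8, 1, by norm_num, by norm_num, fun g h => ?_, fun g h => ?_⟩
    · have h1 := bkD_le_word V S hsymm hgen g h
      have h2 : (0:ℝ) ≤ (wordLength S (g⁻¹ * h) : ℝ) := by positivity
      linarith
    · exact word_le_bkD V S hV0 h1V hVsymm hmono hcube hsymm hgen g h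
  · intro d' hd'
    obtain ⟨M, hM, hMle⟩ := hpart1 d' hd'
    refine ⟨8 * M, M, by linarith, by linarith, fun g h => ?_⟩
    have h1 := hMle g h
    have h2 := word_le_bkD V S hV0 h1V hVsymm hmono hcube hsymm hgen g h
    have h3 : 0 ≤ bkD V S g h := bkD_nonneg V S g h
    nlinarith
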